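/- Let E be a full heap over A, where P is finite (every full heap is a simply folded full heap in the sense of the paper). Then for each p in P the map I |-> S_p(I) is a well-defined permutation of the set B of proper ideals of E, these permutations satisfy the defining relations of the Weyl group W = W(A), so that there is a unique action of W on B with s_p · I = S_p(I) for all p; moreover this action of W on B is transitive. -/

import Mathlib

/-- Two vertices of the Dynkin diagram are adjacent if they are distinct
and the corresponding entry of the generalized Cartan matrix is nonzero. -/
def Adj {P : Type*} (A : P → P → ℤ) (p q : P) : Prop := p ≠ q ∧ A p q ≠ 0

/-- A generalized Cartan matrix with all entries in {2, 0, -1, -2}. -/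
def IsGCM {P : Type*} (A : P → P → ℤ) : Prop :=
  (∀ p, A p p = 2) ∧ (∀ p q, p ≠ q → A p q ≤ 0) ∧
  (∀ p q, (A p q = 0 ↔ A q p = 0)) ∧
  (∀ p q, A p q = 2 ∨ A p q = 0 ∨ A p q = -1 ∨ A p q = -2)

/-- An ideal (downward-closed subset) of a partially ordered set. -/
def IsIdeal {E : Type*} [PartialOrder E] (F : Set E) : Prop :=
  ∀ ⦃x : E⦄, x ∈ F → ∀ ⦃y : E⦄, y ≤ x → y ∈ F

/-- A proper ideal: an ideal meeting each fibre `eps ⁻¹ {p}` in a nonempty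
proper subset. -/
def IsProperIdeal {P E : Type*} [PartialOrder E] (eps : E → P) (F : Set E) : Prop :=
  IsIdeal F ∧ ∀ p : P, (∃ a, eps a = p ∧ a ∈ F) ∧ (∃ a, eps a = p ∧ a ∉ F)

/-- A full heap over the generalized Cartan matrix `A` with labelling map `eps`.
Local finiteness is expressed by the `LocallyFiniteOrder` instance. -/
structure IsFullHeap {P E : Type*} [PartialOrder E] [LocallyFiniteOrder E]
    (A : P → P → ℤ) (eps : E → P) : Prop where
  /-- elements with equal or adjacent labels are comparable -/
  comparable : ∀ a b : E, (eps a = eps b ∨ Adj A (eps a) (eps b)) → a ≤ b ∨ b ≤ a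
  /-- the order is the reflexive-transitive closure of its restriction to
  pairs with equal or adjacent labels -/
  le_generated : ∀ a b : E, a ≤ b ↔
    Relation.ReflTransGen (fun x y : E => x ≤ y ∧ (eps x = eps y ∨ Adj A (eps x) (eps y))) a b
  /-- each fibre is unbounded above in E -/
  unbounded_above : ∀ (p : P) (a : E), ∃ b, eps b = p ∧ ¬ b ≤ a
  /-- each fibre is unbounded below in E -/
  unbounded_below : ∀ (p : P) (a : E), ∃ b, eps b = p ∧ ¬ a ≤ b
  /-- covering elements with adjacent labels exist -/
  covers : ∀ p p' : P, Adj A p p' → ∀ a : E, eps a = p →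
    ∃ b, eps b = p' ∧ (a ⋖ b ∨ b ⋖ a)
  /-- the defining condition on open intervals between consecutive elements
  of a fibre -/
  interval : ∀ a b : E, a < b → eps a = eps b →
    (∀ c, a < c → c < b → eps c ≠ eps a) →
    (∑ c ∈ Finset.Ioo a b, A (eps a) (eps c)) = -2

/-- The character of a pair of proper ideals:
`chi(F, F')(p) = |(F' \ F) ∩ eps⁻¹(p)| - |(F \ F') ∩ eps⁻¹(p)|`. -/
noncomputable def chiFn {P E : Type*} (eps : E → P) (F F' : Set E) : P → ℤ :=
  fun p => (((F' \ F) ∩ eps ⁻¹' {p}).ncard : ℤ) - (((F \ F') ∩ eps ⁻¹' {p}).ncard : ℤ)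

open Classical in
/-- The operator `S_p` on ideals: remove the (unique) element of label `p`
that can be removed, else add the (unique) element of label `p` that can be
added, else do nothing. -/
noncomputable def Sact {P E : Type*} [PartialOrder E] (eps : E → P) (p : P) (I : Set E) :
    Set E :=
  if h : ∃ a, a ∈ I ∧ eps a = p ∧ IsIdeal (I \ {a}) then I \ {h.choose}
  else if h' : ∃ a, a ∉ I ∧ eps a = p ∧ IsIdeal (I ∪ {a}) then I ∪ {h'.choose}
  else I

/-- The defining relations of the Weyl group of a (doubly laced)
generalized Cartan matrix. -/
def weylRels {P : Type*} (A : P → P → ℤ) : Set (FreeGroup P) :=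
  {r | (∃ p, r = FreeGroup.of p ^ 2) ∨
       (∃ p q, A p q = 0 ∧ r = (FreeGroup.of p * FreeGroup.of q) ^ 2) ∨
       (∃ p q, A p q * A q p = 1 ∧ r = (FreeGroup.of p * FreeGroup.of q) ^ 3) ∨
       (∃ p q, A p q * A q p = 2 ∧ r = (FreeGroup.of p * FreeGroup.of q) ^ 4)}

/-- The Weyl group of a generalized Cartan matrix, as a presented group. -/
abbrev WeylGroup {P : Type*} (A : P → P → ℤ) := PresentedGroup (weylRels A)

/-- The reflection `s_p` in the reflection representation on `ℤ^P`:
`s_p(v) = v - (∑ q, a_{pq} v_q) e_p`. -/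
def reflAct {P : Type*} [Fintype P] [DecidableEq P] (A : P → P → ℤ) (p : P) (v : P → ℤ) :
    P → ℤ :=
  fun r => if r = p then v p - ∑ q, A p q * v q else v r

/-- `A` is of affine type: indecomposable, and `A δ = 0` for some positive
integer vector `δ`. -/
def IsAffine {P : Type*} [Fintype P] (A : P → P → ℤ) : Prop :=
  (∀ p q : P, Relation.ReflTransGen (Adj A) p q) ∧
  ∃ δ : P → ℤ, (∀ p, 0 < δ p) ∧ ∀ p, (∑ q, A p q * δ q) = 0

namespace Stmt4Aux
set_option linter.unusedSectionVars false

variable {P E : Type*} [Fintype P] [PartialOrder E] [LocallyFiniteOrder E]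
  {A : P → P → ℤ} {eps : E → P}

lemma adj_symm (hA : IsGCM A) {p q : P} (h : Adj A p q) : Adj A q p :=
  ⟨h.1.symm, fun h0 => h.2 ((hA.2.2.1 p q).2 h0)⟩

lemma rtg_le {a b : E}
    (h : Relation.ReflTransGen
      (fun x y : E => x ≤ y ∧ (eps x = eps y ∨ Adj A (eps x) (eps y))) a b) :
    a ≤ b := by
  induction h with
  | refl => exact le_refl _
  | tail _ h2 ih => exact ih.trans h2.1

lemma step_up (hE : IsFullHeap A eps) {a b : E} (hab : a < b) :
    ∃ c, a < c ∧ c ≤ b ∧ (eps c = eps a ∨ Adj A (eps a) (eps c)) := by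
  have key : ∀ a' : E, Relation.ReflTransGen
      (fun x y : E => x ≤ y ∧ (eps x = eps y ∨ Adj A (eps x) (eps y))) a' b → a' ≠ b →
      ∃ c, a' < c ∧ c ≤ b ∧ (eps c = eps a' ∨ Adj A (eps a') (eps c)) := by
    intro a' hr'
    induction hr' using Relation.ReflTransGen.head_induction_on with
    | refl => intro h; exact absurd rfl h
    | @head x y h1 h2 ih =>
      intro hne
      rcases h1 with ⟨hle, hrel⟩
      rcases eq_or_lt_of_le hle with heq | hlt
      · subst heq
        exact ih hne
      · exact ⟨y, hlt, rtg_le h2, hrel.imp Eq.symm id⟩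
  exact key a ((hE.le_generated a b).1 hab.le) hab.ne

lemma step_down (hA : IsGCM A) (hE : IsFullHeap A eps) {a b : E} (hab : a < b) :
    ∃ c, a ≤ c ∧ c < b ∧ (eps c = eps b ∨ Adj A (eps b) (eps c)) := by
  have hr' := Relation.ReflTransGen.swap b a ((hE.le_generated a b).1 hab.le)
  have key : ∀ b' : E, Relation.ReflTransGen
      (Function.swap (fun x y : E => x ≤ y ∧ (eps x = eps y ∨ Adj A (eps x) (eps y)))) b' a →
      b' ≠ a →
      ∃ c, a ≤ c ∧ c < b' ∧ (eps c = eps b' ∨ Adj A (eps b') (eps c)) := by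
    intro b' hrb
    induction hrb using Relation.ReflTransGen.head_induction_on with
    | refl => intro h; exact absurd rfl h
    | @head x y h1 h2 ih =>
      intro hne
      rcases h1 with ⟨hle, hrel⟩
      rcases eq_or_lt_of_le hle with heq | hlt
      · subst heq
        exact ih hne
      · exact ⟨y, rtg_le (Relation.reflTransGen_swap.1 h2), hlt,
          hrel.imp id (adj_symm hA)⟩
  exact key b hr' hab.ne'

end Stmt4Aux

-- chunk 2 : appended to aux1 content for testing
def TopAt {P E : Type*} [PartialOrder E] (eps : E → P) (I : Set E) (p : P) (a : E) : Prop :=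
  a ∈ I ∧ eps a = p ∧ ∀ x ∈ I, eps x = p → x ≤ a

def BotAt {P E : Type*} [PartialOrder E] (eps : E → P) (I : Set E) (p : P) (b : E) : Prop :=
  b ∉ I ∧ eps b = p ∧ ∀ x, eps x = p → x ∉ I → b ≤ x

namespace Stmt4Aux
set_option linter.unusedSectionVars false
variable {P E : Type*} [Fintype P] [PartialOrder E] [LocallyFiniteOrder E]
  {A : P → P → ℤ} {eps : E → P}

lemma comp_fib (hE : IsFullHeap A eps) {x y : E} (h : eps x = eps y) : x ≤ y ∨ y ≤ x :=
  hE.comparable x y (Or.inl h)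

lemma exists_top (hE : IsFullHeap A eps) {I : Set E} (hI : IsProperIdeal eps I) (p : P) :
    ∃ a, TopAt eps I p a := by
  classical
  obtain ⟨x₀, hx₀p, hx₀I⟩ := (hI.2 p).1
  obtain ⟨k, hkp, hkI⟩ := (hI.2 p).2
  have bound : ∀ x ∈ I, eps x = p → x ≤ k := by
    intro x hx hxp
    rcases comp_fib hE (hxp.trans hkp.symm) with h | h
    · exact h
    · exact absurd (hI.1 hx h) hkI
  set s : Set E := {x | x ∈ I ∧ eps x = p ∧ x₀ ≤ x} with hs
  have hfin : s.Finite := by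
    apply Set.Finite.subset (Finset.finite_toSet (Finset.Icc x₀ k))
    intro x hx
    simp only [Finset.coe_Icc, Set.mem_Icc]
    exact ⟨hx.2.2, bound _ hx.1 hx.2.1⟩
  have hne : s.Nonempty := ⟨x₀, hx₀I, hx₀p, le_refl _⟩
  obtain ⟨m, hm, hmax⟩ := Set.Finite.exists_maximalFor id s hfin hne
  refine ⟨m, hm.1, hm.2.1, ?_⟩
  intro x hx hxp
  rcases comp_fib hE (hxp.trans hm.2.1.symm) with h | h
  · exact h
  · have hxs : x ∈ s := ⟨hx, hxp, hm.2.2.trans h⟩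
    exact hmax hxs h

lemma exists_bot (hE : IsFullHeap A eps) {I : Set E} (hI : IsProperIdeal eps I) (p : P) :
    ∃ b, BotAt eps I p b := by
  classical
  obtain ⟨x₀, hx₀p, hx₀I⟩ := (hI.2 p).2
  obtain ⟨k, hkp, hkI⟩ := (hI.2 p).1
  have bound : ∀ x, eps x = p → x ∉ I → k ≤ x := by
    intro x hxp hx
    rcases comp_fib hE (hxp.trans hkp.symm) with h | h
    · exact absurd (hI.1 hkI h) hx
    · exact h
  set s : Set E := {x | x ∉ I ∧ eps x = p ∧ x ≤ x₀} with hs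
  have hfin : s.Finite := by
    apply Set.Finite.subset (Finset.finite_toSet (Finset.Icc k x₀))
    intro x hx
    simp only [Finset.coe_Icc, Set.mem_Icc]
    exact ⟨bound _ hx.2.1 hx.1, hx.2.2⟩
  have hne : s.Nonempty := ⟨x₀, hx₀I, hx₀p, le_refl _⟩
  obtain ⟨m, hm, hmin⟩ := Set.Finite.exists_minimalFor id s hfin hne
  refine ⟨m, hm.1, hm.2.1, ?_⟩
  intro x hxp hx
  rcases comp_fib hE (hxp.trans hm.2.1.symm) with h | h
  · have hxs : x ∈ s := ⟨hx, hxp, h.trans hm.2.2⟩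
    exact hmin hxs h
  · exact h

lemma topAt_unique (hE : IsFullHeap A eps) {I : Set E} {p : P} {a a' : E}
    (h : TopAt eps I p a) (h' : TopAt eps I p a') : a = a' :=
  le_antisymm (h'.2.2 a h.1 h.2.1) (h.2.2 a' h'.1 h'.2.1)

lemma botAt_unique (hE : IsFullHeap A eps) {I : Set E} {p : P} {b b' : E}
    (h : BotAt eps I p b) (h' : BotAt eps I p b') : b = b' :=
  le_antisymm (h.2.2 b' h'.2.1 h'.1) (h'.2.2 b h.2.1 h.1)

lemma top_lt_bot (hE : IsFullHeap A eps) {I : Set E} (hI : IsIdeal I) {p : P} {a b : E}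
    (ha : TopAt eps I p a) (hb : BotAt eps I p b) : a < b := by
  have hne : a ≠ b := fun h => hb.1 (h ▸ ha.1)
  rcases comp_fib hE (ha.2.1.trans hb.2.1.symm) with h | h
  · exact lt_of_le_of_ne h hne
  · exact absurd (hI ha.1 h) hb.1

lemma mem_of_fib_le_top {I : Set E} (hI : IsIdeal I) {p : P} {a : E}
    (ha : TopAt eps I p a) {x : E} (hx : x ≤ a) : x ∈ I := hI ha.1 hx

lemma no_p_between (hE : IsFullHeap A eps) {I : Set E} (hI : IsIdeal I) {p : P} {a b : E}
    (ha : TopAt eps I p a) (hb : BotAt eps I p b) :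
    ∀ c, a < c → c < b → eps c ≠ eps a := by
  intro c hac hcb hc
  rw [ha.2.1] at hc
  by_cases hcI : c ∈ I
  · exact absurd (ha.2.2 c hcI hc) (not_le_of_gt hac)
  · exact absurd (hb.2.2 c hc hcI) (not_le_of_gt hcb)

lemma sum_Ioo_top_bot (hE : IsFullHeap A eps) {I : Set E} (hI : IsIdeal I) {p : P} {a b : E}
    (ha : TopAt eps I p a) (hb : BotAt eps I p b) :
    (∑ c ∈ Finset.Ioo a b, A p (eps c)) = -2 := by
  have := hE.interval a b (top_lt_bot hE hI ha hb) (ha.2.1.trans hb.2.1.symm)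
    (no_p_between hE hI ha hb)
  rwa [ha.2.1] at this

end Stmt4Aux

namespace Stmt4Aux
set_option linter.unusedSectionVars false
variable {P E : Type*} [Fintype P] [PartialOrder E] [LocallyFiniteOrder E]
  {A : P → P → ℤ} {eps : E → P}

open Classical in
/-- local charge at the `p`-boundary `(a,b)` of an ideal `I`. -/
noncomputable def nsum (A : P → P → ℤ) (eps : E → P) (p : P) (I : Set E) (a b : E) : ℤ :=
  ∑ c ∈ Finset.Ioo a b, if c ∈ I then -(A p (eps c)) else 0

lemma eps_ne_p_of_mem_Ioo (hE : IsFullHeap A eps) {I : Set E} (hI : IsIdeal I) {p : P} {a b : E}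
    (ha : TopAt eps I p a) (hb : BotAt eps I p b) {c : E} (hc : c ∈ Finset.Ioo a b) :
    eps c ≠ p := by
  rw [Finset.mem_Ioo] at hc
  have := no_p_between hE hI ha hb c hc.1 hc.2
  rwa [ha.2.1] at this

lemma term_nonneg (hA : IsGCM A) (hE : IsFullHeap A eps) {I : Set E} (hI : IsIdeal I)
    {p : P} {a b : E} (ha : TopAt eps I p a) (hb : BotAt eps I p b) {c : E}
    (hc : c ∈ Finset.Ioo a b) : 0 ≤ -(A p (eps c)) := by
  have h := eps_ne_p_of_mem_Ioo hE hI ha hb hc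
  have := hA.2.1 p (eps c) (Ne.symm h)
  omega

open Classical in
lemma nsum_add_compl (hA : IsGCM A) (hE : IsFullHeap A eps) {I : Set E} (hI : IsIdeal I)
    {p : P} {a b : E} (ha : TopAt eps I p a) (hb : BotAt eps I p b) :
    nsum A eps p I a b
      + (∑ c ∈ Finset.Ioo a b, if c ∈ I then 0 else -(A p (eps c))) = 2 := by
  rw [nsum, ← Finset.sum_add_distrib]
  have : ∀ c ∈ Finset.Ioo a b,
      ((if c ∈ I then -(A p (eps c)) else 0) + if c ∈ I then 0 else -(A p (eps c)))
        = -(A p (eps c)) := by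
    intro c _; split <;> ring
  rw [Finset.sum_congr rfl this]
  have := sum_Ioo_top_bot hE hI ha hb
  rw [show (2:ℤ) = -(-2) by ring, ← this, ← Finset.sum_neg_distrib]

open Classical in
lemma nsum_nonneg (hA : IsGCM A) (hE : IsFullHeap A eps) {I : Set E} (hI : IsIdeal I)
    {p : P} {a b : E} (ha : TopAt eps I p a) (hb : BotAt eps I p b) :
    0 ≤ nsum A eps p I a b := by
  apply Finset.sum_nonneg
  intro c hc
  split
  · exact term_nonneg hA hE hI ha hb hc
  · exact le_refl _

open Classical in
lemma compl_nonneg (hA : IsGCM A) (hE : IsFullHeap A eps) {I : Set E} (hI : IsIdeal I)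
    {p : P} {a b : E} (ha : TopAt eps I p a) (hb : BotAt eps I p b) :
    0 ≤ (∑ c ∈ Finset.Ioo a b, if c ∈ I then 0 else -(A p (eps c))) := by
  apply Finset.sum_nonneg
  intro c hc
  split
  · exact le_refl _
  · exact term_nonneg hA hE hI ha hb hc

lemma nsum_le_two (hA : IsGCM A) (hE : IsFullHeap A eps) {I : Set E} (hI : IsIdeal I)
    {p : P} {a b : E} (ha : TopAt eps I p a) (hb : BotAt eps I p b) :
    nsum A eps p I a b ≤ 2 := by
  have h1 := nsum_add_compl hA hE hI ha hb
  have h2 := compl_nonneg hA hE hI ha hb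
  omega

/-- maximality of the top element is equivalent to vanishing local charge. -/
lemma maximal_iff_nsum_zero (hA : IsGCM A) (hE : IsFullHeap A eps) {I : Set E}
    (hI : IsIdeal I) {p : P} {a b : E} (ha : TopAt eps I p a) (hb : BotAt eps I p b) :
    (∀ x ∈ I, ¬ a < x) ↔ nsum A eps p I a b = 0 := by
  classical
  constructor
  · intro hmax
    apply Finset.sum_eq_zero
    intro c hc
    rw [if_neg]
    intro hcI
    exact hmax c hcI (Finset.mem_Ioo.1 hc).1
  · intro h0 z hz haz
    obtain ⟨c, hac, hcz, hrel⟩ := step_up hE haz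
    have hcI : c ∈ I := hI hz hcz
    rcases hrel with hcp | hadj
    · rw [ha.2.1] at hcp
      exact absurd (ha.2.2 c hcI hcp) (not_le_of_gt hac)
    · rw [ha.2.1] at hadj
      -- c is comparable with b
      have hcb : c < b := by
        have hcomp : c ≤ b ∨ b ≤ c := hE.comparable c b
          (Or.inr (by rw [hb.2.1]; exact adj_symm hA hadj))
        rcases hcomp with h | h
        · exact lt_of_le_of_ne h (fun hcbeq => hb.1 (hcbeq ▸ hcI))
        · exact absurd (hI hcI h) hb.1
      have hcmem : c ∈ Finset.Ioo a b := Finset.mem_Ioo.2 ⟨hac, hcb⟩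
      have := Finset.sum_eq_zero_iff_of_nonneg (fun d hd => by
        split
        · exact term_nonneg hA hE hI ha hb hd
        · exact le_refl _) |>.1 h0 c hcmem
      rw [if_pos hcI] at this
      exact hadj.2 (by omega)

/-- fullness below `b` is equivalent to maximal local charge. -/
lemma full_iff_nsum_two (hA : IsGCM A) (hE : IsFullHeap A eps) {I : Set E}
    (hI : IsIdeal I) {p : P} {a b : E} (ha : TopAt eps I p a) (hb : BotAt eps I p b) :
    (∀ z, z < b → z ∈ I) ↔ nsum A eps p I a b = 2 := by
  classical
  have hsplit := nsum_add_compl hA hE hI ha hb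
  constructor
  · intro hfull
    have : (∑ c ∈ Finset.Ioo a b, if c ∈ I then 0 else -(A p (eps c))) = 0 := by
      apply Finset.sum_eq_zero
      intro c hc
      rw [if_pos (hfull c (Finset.mem_Ioo.1 hc).2)]
    omega
  · intro h2 z hzb
    by_contra hzI
    have hcompl0 : (∑ c ∈ Finset.Ioo a b, if c ∈ I then 0 else -(A p (eps c))) = 0 := by omega
    obtain ⟨c, hzc, hcb, hrel⟩ := step_down hA hE hzb
    have hcI : c ∉ I := fun h => hzI (hI h hzc)
    rcases hrel with hcp | hadj
    · rw [hb.2.1] at hcp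
      exact absurd (hb.2.2 c hcp hcI) (not_le_of_gt hcb)
    · rw [hb.2.1] at hadj
      have hac : a < c := by
        have hcomp : c ≤ a ∨ a ≤ c := hE.comparable c a
          (Or.inr (by rw [ha.2.1]; exact adj_symm hA hadj))
        rcases hcomp with h | h
        · exact absurd (hI ha.1 h) hcI
        · exact lt_of_le_of_ne h (fun haceq => hcI (haceq ▸ ha.1))
      have hcmem : c ∈ Finset.Ioo a b := Finset.mem_Ioo.2 ⟨hac, hcb⟩
      have := Finset.sum_eq_zero_iff_of_nonneg (fun d hd => by
        split
        · exact le_refl _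
        · exact term_nonneg hA hE hI ha hb hd) |>.1 hcompl0 c hcmem
      rw [if_neg hcI] at this
      exact hadj.2 (by omega)

end Stmt4Aux

namespace Stmt4Aux
set_option linter.unusedSectionVars false
variable {P E : Type*} [Fintype P] [PartialOrder E] [LocallyFiniteOrder E]
  {A : P → P → ℤ} {eps : E → P}

lemma isIdeal_diff_iff {I : Set E} (hI : IsIdeal I) {a : E} (ha : a ∈ I) :
    IsIdeal (I \ {a}) ↔ ∀ x ∈ I, a ≤ x → x = a := by
  constructor
  · intro h x hx hax
    by_contra hne
    exact ((h (x := x) ⟨hx, hne⟩ (y := a) hax).2) rfl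
  · intro h x hx y hyx
    refine ⟨hI hx.1 hyx, ?_⟩
    intro hya
    subst hya
    exact hx.2 (h x hx.1 hyx)

lemma isIdeal_union_iff {I : Set E} (hI : IsIdeal I) {a : E} (ha : a ∉ I) :
    IsIdeal (I ∪ {a}) ↔ ∀ x, x < a → x ∈ I := by
  constructor
  · intro h x hxa
    have : x ∈ I ∪ {a} := h (x := a) (Or.inr rfl) (y := x) hxa.le
    rcases this with h' | h'
    · exact h'
    · exact absurd h' (by simp [hxa.ne])
  · intro h x hx y hyx
    rcases hx with hx | hx
    · exact Or.inl (hI hx hyx)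
    · rcases eq_or_lt_of_le (hx ▸ hyx) with heq | hlt
      · exact Or.inr heq
      · exact Or.inl (h y hlt)

/-- removable elements of label `p` are the top of the cut, and exist iff `nsum = 0`. -/
lemma removable_eq_top (hE : IsFullHeap A eps) {I : Set E} (hI : IsIdeal I) {p : P} {a t : E}
    (ht : TopAt eps I p t) (haI : a ∈ I) (hap : eps a = p) (hid : IsIdeal (I \ {a})) :
    a = t := by
  have hmax := (isIdeal_diff_iff hI haI).1 hid
  exact ((hmax t ht.1 (ht.2.2 a haI hap)).symm)

lemma removable_exists_iff (hA : IsGCM A) (hE : IsFullHeap A eps) {I : Set E}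
    (hI : IsIdeal I) {p : P} {a b : E} (ha : TopAt eps I p a) (hb : BotAt eps I p b) :
    (∃ x, x ∈ I ∧ eps x = p ∧ IsIdeal (I \ {x})) ↔ nsum A eps p I a b = 0 := by
  constructor
  · intro ⟨x, hxI, hxp, hid⟩
    have hx := removable_eq_top hE hI ha hxI hxp hid
    subst hx
    rw [← maximal_iff_nsum_zero hA hE hI ha hb]
    intro z hz haz
    have := (isIdeal_diff_iff hI hxI).1 hid z hz haz.le
    exact haz.ne' this
  · intro h0
    refine ⟨a, ha.1, ha.2.1, (isIdeal_diff_iff hI ha.1).2 ?_⟩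
    intro x hx hax
    by_contra hne
    exact (maximal_iff_nsum_zero hA hE hI ha hb).2 h0 x hx (lt_of_le_of_ne hax (Ne.symm hne))

lemma addable_eq_bot (hE : IsFullHeap A eps) {I : Set E} (hI : IsIdeal I) {p : P} {a t : E}
    (ht : BotAt eps I p t) (haI : a ∉ I) (hap : eps a = p) (hid : IsIdeal (I ∪ {a})) :
    a = t := by
  have hfull := (isIdeal_union_iff hI haI).1 hid
  have h1 : t ≤ a := ht.2.2 a hap haI
  rcases eq_or_lt_of_le h1 with heq | hlt
  · exact heq.symm
  · exact absurd (hfull t hlt) ht.1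

lemma addable_exists_iff (hA : IsGCM A) (hE : IsFullHeap A eps) {I : Set E}
    (hI : IsIdeal I) {p : P} {a b : E} (ha : TopAt eps I p a) (hb : BotAt eps I p b) :
    (∃ x, x ∉ I ∧ eps x = p ∧ IsIdeal (I ∪ {x})) ↔ nsum A eps p I a b = 2 := by
  constructor
  · intro ⟨x, hxI, hxp, hid⟩
    have hx := addable_eq_bot hE hI hb hxI hxp hid
    subst hx
    rw [← full_iff_nsum_two hA hE hI ha hb]
    exact (isIdeal_union_iff hI hxI).1 hid
  · intro h2
    exact ⟨b, hb.1, hb.2.1,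
      (isIdeal_union_iff hI hb.1).2 ((full_iff_nsum_two hA hE hI ha hb).2 h2)⟩

open Classical in
lemma Sact_eq_of_nsum_zero (hA : IsGCM A) (hE : IsFullHeap A eps) {I : Set E}
    (hI : IsIdeal I) {p : P} {a b : E} (ha : TopAt eps I p a) (hb : BotAt eps I p b)
    (h0 : nsum A eps p I a b = 0) :
    Sact eps p I = I \ {a} := by
  have hex : ∃ x, x ∈ I ∧ eps x = p ∧ IsIdeal (I \ {x}) :=
    (removable_exists_iff hA hE hI ha hb).2 h0
  rw [Sact, dif_pos hex]
  obtain ⟨h1, h2, h3⟩ := hex.choose_spec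
  rw [removable_eq_top hE hI ha h1 h2 h3]

open Classical in
lemma Sact_eq_of_nsum_one (hA : IsGCM A) (hE : IsFullHeap A eps) {I : Set E}
    (hI : IsIdeal I) {p : P} {a b : E} (ha : TopAt eps I p a) (hb : BotAt eps I p b)
    (h1 : nsum A eps p I a b = 1) :
    Sact eps p I = I := by
  rw [Sact, dif_neg, dif_neg]
  · intro hex
    have := (addable_exists_iff hA hE hI ha hb).1 (by exact ⟨hex.choose, hex.choose_spec⟩)
    omega
  · intro hex
    have := (removable_exists_iff hA hE hI ha hb).1 ⟨hex.choose, hex.choose_spec⟩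
    omega

open Classical in
lemma Sact_eq_of_nsum_two (hA : IsGCM A) (hE : IsFullHeap A eps) {I : Set E}
    (hI : IsIdeal I) {p : P} {a b : E} (ha : TopAt eps I p a) (hb : BotAt eps I p b)
    (h2 : nsum A eps p I a b = 2) :
    Sact eps p I = I ∪ {b} := by
  have hex : ∃ x, x ∉ I ∧ eps x = p ∧ IsIdeal (I ∪ {x}) :=
    (addable_exists_iff hA hE hI ha hb).2 h2
  rw [Sact, dif_neg, dif_pos hex]
  · obtain ⟨h1', h2', h3'⟩ := hex.choose_spec
    rw [addable_eq_bot hE hI hb h1' h2' h3']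
  · intro hrem
    have := (removable_exists_iff hA hE hI ha hb).1 ⟨hrem.choose, hrem.choose_spec⟩
    omega

end Stmt4Aux

namespace Stmt4Aux
set_option linter.unusedSectionVars false
variable {P E : Type*} [Fintype P] [PartialOrder E] [LocallyFiniteOrder E]
  {A : P → P → ℤ} {eps : E → P}

lemma proper_diff_top (hE : IsFullHeap A eps) {I : Set E} (hI : IsProperIdeal eps I)
    {p : P} {a : E} (ha : TopAt eps I p a) (hid : IsIdeal (I \ {a})) :
    IsProperIdeal eps (I \ {a}) := by
  refine ⟨hid, fun r => ⟨?_, ?_⟩⟩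
  · by_cases hrp : r = p
    · subst hrp
      obtain ⟨y, hyp, hy⟩ := hE.unbounded_below r a
      have hylt : y < a := by
        rcases comp_fib hE (hyp.trans ha.2.1.symm) with h | h
        · exact lt_of_le_of_ne h (fun he => hy (he ▸ le_refl _))
        · exact absurd h hy
      exact ⟨y, hyp, hI.1 ha.1 hylt.le, fun he => absurd (he ▸ hylt) (lt_irrefl _)⟩
    · obtain ⟨y, hyp, hy⟩ := (hI.2 r).1
      refine ⟨y, hyp, hy, ?_⟩
      intro he
      rw [Set.mem_singleton_iff] at he
      exact hrp (by rw [← hyp, he, ha.2.1])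
  · obtain ⟨y, hyp, hy⟩ := (hI.2 r).2
    exact ⟨y, hyp, fun h => hy h.1⟩

lemma proper_union_bot (hE : IsFullHeap A eps) {I : Set E} (hI : IsProperIdeal eps I)
    {p : P} {a b : E} (ha : TopAt eps I p a) (hb : BotAt eps I p b)
    (hid : IsIdeal (I ∪ {b})) :
    IsProperIdeal eps (I ∪ {b}) := by
  refine ⟨hid, fun r => ⟨?_, ?_⟩⟩
  · obtain ⟨y, hyp, hy⟩ := (hI.2 r).1
    exact ⟨y, hyp, Or.inl hy⟩
  · by_cases hrp : r = p
    · subst hrp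
      obtain ⟨y, hyp, hy⟩ := hE.unbounded_above r b
      have hblt : b < y := by
        rcases comp_fib hE (hyp.trans hb.2.1.symm) with h | h
        · exact absurd h hy
        · exact lt_of_le_of_ne h (fun he => hy (he ▸ le_refl _))
      refine ⟨y, hyp, ?_⟩
      intro hmem
      rcases hmem with h | h
      · have : y ≤ a := ha.2.2 y h hyp
        have : b < a := lt_of_lt_of_le hblt this
        exact absurd (hI.1 ha.1 this.le) hb.1
      · exact absurd (h ▸ hblt) (lt_irrefl _)
    · obtain ⟨y, hyp, hy⟩ := (hI.2 r).2
      refine ⟨y, hyp, ?_⟩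
      intro hmem
      rcases hmem with h | h
      · exact hy h
      · rw [Set.mem_singleton_iff] at h
        exact hrp (by rw [← hyp, h, hb.2.1])
  
lemma proper_Sact (hA : IsGCM A) (hE : IsFullHeap A eps) {I : Set E}
    (hI : IsProperIdeal eps I) (p : P) : IsProperIdeal eps (Sact eps p I) := by
  obtain ⟨a, ha⟩ := exists_top hE hI p
  obtain ⟨b, hb⟩ := exists_bot hE hI p
  have h0 := nsum_nonneg hA hE hI.1 ha hb
  have h2 := nsum_le_two hA hE hI.1 ha hb
  interval_cases h : (nsum A eps p I a b)
  · rw [Sact_eq_of_nsum_zero hA hE hI.1 ha hb h]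
    exact proper_diff_top hE hI ha
      ((isIdeal_diff_iff hI.1 ha.1).2 (by
        rw [← maximal_iff_nsum_zero hA hE hI.1 ha hb] at h
        intro x hx hax
        by_contra hne
        exact h x hx (lt_of_le_of_ne hax (Ne.symm hne))))
  · rw [Sact_eq_of_nsum_one hA hE hI.1 ha hb h]
    exact hI
  · rw [Sact_eq_of_nsum_two hA hE hI.1 ha hb h]
    exact proper_union_bot hE hI ha hb
      ((isIdeal_union_iff hI.1 hb.1).2 ((full_iff_nsum_two hA hE hI.1 ha hb).2 h))

end Stmt4Aux

namespace Stmt4Aux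
set_option linter.unusedSectionVars false
variable {P E : Type*} [Fintype P] [PartialOrder E] [LocallyFiniteOrder E]
  {A : P → P → ℤ} {eps : E → P}

lemma diff_fib_finite (hE : IsFullHeap A eps) {I J : Set E} (hI : IsProperIdeal eps I)
    (hJ : IsProperIdeal eps J) (r : P) : ((I \ J) ∩ eps ⁻¹' {r}).Finite := by
  obtain ⟨aI, haI⟩ := exists_top hE hI r
  obtain ⟨aJ, haJ⟩ := exists_top hE hJ r
  apply Set.Finite.subset (Finset.finite_toSet (Finset.Ioc aJ aI))
  rintro x ⟨⟨hxI, hxJ⟩, hxr⟩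
  simp only [Set.mem_preimage, Set.mem_singleton_iff] at hxr
  simp only [Finset.coe_Ioc, Set.mem_Ioc]
  constructor
  · rcases comp_fib hE (hxr.trans haJ.2.1.symm) with h | h
    · exact absurd (hJ.1 haJ.1 ((lt_of_le_of_ne h (fun he => hxJ (he ▸ haJ.1))).le)) (by
        intro hc; exact hxJ (hJ.1 haJ.1 (lt_of_le_of_ne h (fun he => hxJ (he ▸ haJ.1))).le))
    · exact lt_of_le_of_ne h (fun he => hxJ (he.symm ▸ haJ.1))
  · exact haI.2.2 x hxI hxr

lemma diff_finite (hE : IsFullHeap A eps) {I J : Set E} (hI : IsProperIdeal eps I)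
    (hJ : IsProperIdeal eps J) : (I \ J).Finite := by
  have : I \ J = ⋃ r : P, ((I \ J) ∩ eps ⁻¹' {r}) := by
    ext x
    simp only [Set.mem_iUnion, Set.mem_inter_iff, Set.mem_preimage, Set.mem_singleton_iff]
    exact ⟨fun h => ⟨eps x, h, rfl⟩, fun ⟨r, h, _⟩ => h⟩
  rw [this]
  exact Set.finite_iUnion (diff_fib_finite hE hI hJ)

/-- the two fibre differences cannot both be nonempty -/
lemma fib_diff_not_both (hE : IsFullHeap A eps) {I J : Set E} (hI : IsIdeal I)
    (hJ : IsIdeal J) {r : P} {x y : E}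
    (hx : x ∈ (I \ J) ∩ eps ⁻¹' {r}) (hy : y ∈ (J \ I) ∩ eps ⁻¹' {r}) : False := by
  obtain ⟨⟨hxI, hxJ⟩, hxr⟩ := hx
  obtain ⟨⟨hyJ, hyI⟩, hyr⟩ := hy
  simp only [Set.mem_preimage, Set.mem_singleton_iff] at hxr hyr
  rcases comp_fib hE (hxr.trans hyr.symm) with h | h
  · exact hxJ (hJ hyJ h)
  · exact hyI (hI hxI h)

lemma chi_inj (hE : IsFullHeap A eps) {I J : Set E} (hI : IsProperIdeal eps I)
    (hJ : IsProperIdeal eps J) (h : ∀ r, chiFn eps I J r = 0) : I = J := by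
  have key : ∀ r : P, ((I \ J) ∩ eps ⁻¹' {r}) = ∅ ∧ ((J \ I) ∩ eps ⁻¹' {r}) = ∅ := by
    intro r
    have hr := h r
    rw [chiFn] at hr
    by_cases h1 : ((J \ I) ∩ eps ⁻¹' {r}).Nonempty
    · have h2 : ((I \ J) ∩ eps ⁻¹' {r}) = ∅ := by
        by_contra hne
        obtain ⟨x, hx⟩ := Set.nonempty_iff_ne_empty.2 hne
        obtain ⟨y, hy⟩ := h1
        exact fib_diff_not_both hE hI.1 hJ.1 hx hy
      rw [h2, Set.ncard_empty] at hr
      have : ((J \ I) ∩ eps ⁻¹' {r}).ncard = 0 := by omega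
      rw [Set.ncard_eq_zero (diff_fib_finite hE hJ hI r)] at this
      exact absurd this (Set.nonempty_iff_ne_empty.1 h1)
    · rw [Set.not_nonempty_iff_eq_empty] at h1
      rw [h1, Set.ncard_empty] at hr
      have : ((I \ J) ∩ eps ⁻¹' {r}).ncard = 0 := by omega
      rw [Set.ncard_eq_zero (diff_fib_finite hE hI hJ r)] at this
      exact ⟨this, h1⟩
  ext x
  constructor
  · intro hx
    by_contra hxJ
    have := (key (eps x)).1
    rw [Set.eq_empty_iff_forall_notMem] at this
    exact this x ⟨⟨hx, hxJ⟩, rfl⟩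
  · intro hx
    by_contra hxI
    have := (key (eps x)).2
    rw [Set.eq_empty_iff_forall_notMem] at this
    exact this x ⟨⟨hx, hxI⟩, rfl⟩

open Classical in
/-- χ after inserting one element into the second argument -/
lemma chi_insert (hE : IsFullHeap A eps) {I₀ J : Set E} (hI₀ : IsProperIdeal eps I₀)
    (hJ : IsProperIdeal eps J) {x : E} (hx : x ∉ J) (s : P) :
    chiFn eps I₀ (J ∪ {x}) s = chiFn eps I₀ J s + (if eps x = s then 1 else 0) := by
  classical
  rw [chiFn, chiFn]
  by_cases hxs : eps x = s
  · rw [if_pos hxs]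
    by_cases hxI : x ∈ I₀
    · have e1 : ((J ∪ {x}) \ I₀) ∩ eps ⁻¹' {s} = (J \ I₀) ∩ eps ⁻¹' {s} := by
        ext y
        simp only [Set.mem_inter_iff, Set.mem_diff, Set.mem_union, Set.mem_singleton_iff,
          Set.mem_preimage]
        constructor
        · rintro ⟨⟨hy | hy, hyI⟩, hys⟩
          · exact ⟨⟨hy, hyI⟩, hys⟩
          · exact absurd (hy ▸ hxI) hyI
        · rintro ⟨⟨hy, hyI⟩, hys⟩
          exact ⟨⟨Or.inl hy, hyI⟩, hys⟩
      have e2 : (I₀ \ (J ∪ {x})) ∩ eps ⁻¹' {s}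
          = ((I₀ \ J) ∩ eps ⁻¹' {s}) \ {x} := by
        ext y
        simp only [Set.mem_inter_iff, Set.mem_diff, Set.mem_union, Set.mem_singleton_iff,
          Set.mem_preimage]
        tauto
      have hxmem : x ∈ (I₀ \ J) ∩ eps ⁻¹' {s} := ⟨⟨hxI, hx⟩, hxs⟩
      rw [e1, e2, Set.ncard_diff_singleton_of_mem hxmem]
      have hpos : 0 < ((I₀ \ J) ∩ eps ⁻¹' {s}).ncard :=
        (Set.ncard_pos (diff_fib_finite hE hI₀ hJ s)).2 ⟨x, hxmem⟩
      push_cast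
      omega
    · have e1 : ((J ∪ {x}) \ I₀) ∩ eps ⁻¹' {s}
          = insert x ((J \ I₀) ∩ eps ⁻¹' {s}) := by
        ext y
        simp only [Set.mem_inter_iff, Set.mem_diff, Set.mem_union, Set.mem_insert_iff,
          Set.mem_singleton_iff, Set.mem_preimage]
        constructor
        · rintro ⟨⟨hy | hy, hyI⟩, hys⟩
          · exact Or.inr ⟨⟨hy, hyI⟩, hys⟩
          · exact Or.inl hy
        · rintro (rfl | ⟨⟨hy, hyI⟩, hys⟩)
          · exact ⟨⟨Or.inr rfl, hxI⟩, hxs⟩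
          · exact ⟨⟨Or.inl hy, hyI⟩, hys⟩
      have e2 : (I₀ \ (J ∪ {x})) ∩ eps ⁻¹' {s} = (I₀ \ J) ∩ eps ⁻¹' {s} := by
        ext y
        simp only [Set.mem_inter_iff, Set.mem_diff, Set.mem_union, Set.mem_singleton_iff,
          Set.mem_preimage]
        constructor
        · rintro ⟨⟨hyI, hy⟩, hys⟩
          exact ⟨⟨hyI, fun h => hy (Or.inl h)⟩, hys⟩
        · rintro ⟨⟨hyI, hy⟩, hys⟩
          refine ⟨⟨hyI, ?_⟩, hys⟩
          rintro (h | h)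
          · exact hy h
          · exact hxI (h ▸ hyI)
      have hxnmem : x ∉ (J \ I₀) ∩ eps ⁻¹' {s} := fun h => hx h.1.1
      rw [e1, e2, Set.ncard_insert_of_notMem hxnmem (diff_fib_finite hE hJ hI₀ s)]
      push_cast
      omega
  · rw [if_neg hxs]
    have e1 : ((J ∪ {x}) \ I₀) ∩ eps ⁻¹' {s} = (J \ I₀) ∩ eps ⁻¹' {s} := by
      ext y
      simp only [Set.mem_inter_iff, Set.mem_diff, Set.mem_union, Set.mem_singleton_iff,
        Set.mem_preimage]
      constructor
      · rintro ⟨⟨hy | hy, hyI⟩, hys⟩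
        · exact ⟨⟨hy, hyI⟩, hys⟩
        · exact absurd (hy ▸ hys) hxs
      · rintro ⟨⟨hy, hyI⟩, hys⟩
        exact ⟨⟨Or.inl hy, hyI⟩, hys⟩
    have e2 : (I₀ \ (J ∪ {x})) ∩ eps ⁻¹' {s} = (I₀ \ J) ∩ eps ⁻¹' {s} := by
      ext y
      simp only [Set.mem_inter_iff, Set.mem_diff, Set.mem_union, Set.mem_singleton_iff,
        Set.mem_preimage]
      constructor
      · rintro ⟨⟨hyI, hy⟩, hys⟩
        exact ⟨⟨hyI, fun h => hy (Or.inl h)⟩, hys⟩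
      · rintro ⟨⟨hyI, hy⟩, hys⟩
        refine ⟨⟨hyI, ?_⟩, hys⟩
        rintro (h | h)
        · exact hy h
        · exact hxs (h ▸ hys)
    rw [e1, e2]
    ring

end Stmt4Aux

namespace Stmt4Aux
attribute [-instance] Set.decidableUnion Set.decidableSingleton Set.decidableSetOf
set_option linter.unusedSectionVars false
variable {P E : Type*} [Fintype P] [PartialOrder E] [LocallyFiniteOrder E]
  {A : P → P → ℤ} {eps : E → P}

open Classical in
lemma chi_insert_left (hE : IsFullHeap A eps) {J K : Set E} (hJ : IsProperIdeal eps J)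
    (hK : IsProperIdeal eps K) {x : E} (hxJ : x ∉ J) (hxK : x ∈ K) (s : P) :
    chiFn eps (J ∪ {x}) K s = chiFn eps J K s - (if eps x = s then 1 else 0) := by
  rw [chiFn, chiFn]
  have e1 : (K \ (J ∪ {x})) ∩ eps ⁻¹' {s} = ((K \ J) ∩ eps ⁻¹' {s}) \ {x} := by
    ext y
    simp only [Set.mem_inter_iff, Set.mem_diff, Set.mem_union, Set.mem_singleton_iff,
      Set.mem_preimage]
    tauto
  have e2 : ((J ∪ {x}) \ K) ∩ eps ⁻¹' {s} = (J \ K) ∩ eps ⁻¹' {s} := by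
    ext y
    simp only [Set.mem_inter_iff, Set.mem_diff, Set.mem_union, Set.mem_singleton_iff,
      Set.mem_preimage]
    constructor
    · rintro ⟨⟨hy | hy, hyK⟩, hys⟩
      · exact ⟨⟨hy, hyK⟩, hys⟩
      · exact absurd (hy ▸ hxK) hyK
    · rintro ⟨⟨hy, hyK⟩, hys⟩
      exact ⟨⟨Or.inl hy, hyK⟩, hys⟩
  rw [e1, e2]
  by_cases hxs : eps x = s
  · rw [if_pos hxs]
    have hxmem : x ∈ (K \ J) ∩ eps ⁻¹' {s} := ⟨⟨hxK, hxJ⟩, hxs⟩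
    rw [Set.ncard_diff_singleton_of_mem hxmem]
    have hpos : 0 < ((K \ J) ∩ eps ⁻¹' {s}).ncard :=
      (Set.ncard_pos (diff_fib_finite hE hK hJ s)).2 ⟨x, hxmem⟩
    push_cast
    omega
  · rw [if_neg hxs]
    have : ((K \ J) ∩ eps ⁻¹' {s}) \ {x} = (K \ J) ∩ eps ⁻¹' {s} := by
      ext y
      simp only [Set.mem_diff, Set.mem_inter_iff, Set.mem_preimage, Set.mem_singleton_iff]
      constructor
      · rintro ⟨h, _⟩; exact h
      · rintro ⟨h1, h2⟩
        exact ⟨⟨h1, h2⟩, fun hy => hxs (hy ▸ h2)⟩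
    rw [this]
    ring

open Classical in
/-- Step lemma: adding an addable element `x` to an ideal changes the local charge
at the `p`-boundary by `-A p (eps x)`. -/
lemma nsum_insert (hA : IsGCM A) (hE : IsFullHeap A eps) {J : Set E}
    (hJ : IsProperIdeal eps J) {x : E} (hx : x ∉ J) (hadd : ∀ y, y < x → y ∈ J)
    (p : P) {a b a' b' : E} (ha : TopAt eps J p a) (hb : BotAt eps J p b)
    (ha' : TopAt eps (J ∪ {x}) p a') (hb' : BotAt eps (J ∪ {x}) p b') :
    nsum A eps p (J ∪ {x}) a' b' = nsum A eps p J a b - A p (eps x) := by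
  by_cases hxp : eps x = p
  · -- x is the bottom of the complement of J on fibre p
    have hxb : x = b := by
      have h1 : b ≤ x := hb.2.2 x hxp hx
      rcases eq_or_lt_of_le h1 with heq | hlt
      · exact heq.symm
      · exact absurd (hadd b hlt) hb.1
    have ha'x : a' = x := by
      refine topAt_unique hE ha' ⟨Or.inr rfl, hxp, ?_⟩
      rintro z (hz | hz) hzp
      · exact (ha.2.2 z hz hzp).trans (hxb ▸ (top_lt_bot hE hJ.1 ha hb).le)
      · exact hz.le
    have hL : nsum A eps p (J ∪ {x}) a' b' = 0 := by
      apply Finset.sum_eq_zero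
      intro c hc
      rw [Finset.mem_Ioo, ha'x] at hc
      rw [if_neg]
      rintro (hcJ | hcJ)
      · exact hx (hJ.1 hcJ hc.1.le)
      · exact absurd (hcJ ▸ hc.1) (lt_irrefl x)
    have hR : nsum A eps p J a b = 2 := by
      rw [← full_iff_nsum_two hA hE hJ.1 ha hb]
      intro z hz
      exact hadd z (hxb ▸ hz)
    rw [hL, hR, hxp, hA.1 p]
    ring
  · -- boundary elements stay the same
    have ha'' : a' = a := by
      refine topAt_unique hE ha' ⟨Or.inl ha.1, ha.2.1, ?_⟩
      rintro z (hz | hz) hzp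
      · exact ha.2.2 z hz hzp
      · exact absurd (hz ▸ hzp) hxp
    have hb'' : b' = b := by
      refine botAt_unique hE hb' ⟨?_, hb.2.1, ?_⟩
      · rintro (h | h)
        · exact hb.1 h
        · exact hxp (h ▸ hb.2.1)
      · intro z hzp hz
        exact hb.2.2 z hzp (fun h => hz (Or.inl h))
    rw [ha'', hb'']
    by_cases hA0 : A p (eps x) = 0
    · rw [hA0, sub_zero]
      apply Finset.sum_congr rfl
      intro c hc
      by_cases hcx : c = x
      · subst hcx
        have hcm : c ∈ J ∪ {c} := Or.inr rfl
        rw [if_pos hcm, if_neg hx, hA0]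
        ring
      · congr 1
        simp only [Set.mem_union, Set.mem_singleton_iff, eq_iff_iff]
        exact ⟨fun h => h.resolve_right hcx, Or.inl⟩
    · have hadj : Adj A p (eps x) := ⟨Ne.symm hxp, hA0⟩
      have hax : a < x := by
        rcases hE.comparable a x (Or.inr (by rw [ha.2.1]; exact hadj)) with h | h
        · exact lt_of_le_of_ne h (fun he => hx (he ▸ ha.1))
        · exact absurd (hJ.1 ha.1 h) hx
      have hxb : x < b := by
        rcases hE.comparable x b (Or.inr (by rw [hb.2.1]; exact adj_symm hA hadj)) with h | h
        · refine lt_of_le_of_ne h (fun he => hxp ?_)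
          rw [he]; exact hb.2.1
        · have hbx : b < x := by
            refine lt_of_le_of_ne h (fun he => hxp ?_)
            rw [← he]; exact hb.2.1
          exact absurd (hadd b hbx) hb.1
      have hxmem : x ∈ Finset.Ioo a b := Finset.mem_Ioo.2 ⟨hax, hxb⟩
      have key : (∑ c ∈ Finset.Ioo a b,
          ((if c ∈ J ∪ {x} then -(A p (eps c)) else 0) - (if c ∈ J then -(A p (eps c)) else 0)))
          = -(A p (eps x)) := by
        have hcongr : ∀ c ∈ Finset.Ioo a b,
            ((if c ∈ J ∪ {x} then -(A p (eps c)) else 0) - (if c ∈ J then -(A p (eps c)) else 0))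
            = (if c = x then -(A p (eps c)) else 0) := by
          intro c _
          by_cases hcx : c = x
          · subst hcx
            rw [if_pos rfl, if_pos (show c ∈ J ∪ {c} from Or.inr rfl), if_neg hx]
            ring
          · rw [if_neg hcx]
            by_cases hcJ : c ∈ J
            · rw [if_pos (show c ∈ J ∪ {x} from Or.inl hcJ), if_pos hcJ]; ring
            · rw [if_neg (show c ∉ J ∪ {x} by rintro (h | h); exacts [hcJ h, hcx h]),
                if_neg hcJ]
              ring
        rw [Finset.sum_congr rfl hcongr]
        classical
        rw [Finset.sum_ite_eq' (Finset.Ioo a b) x (fun c => -(A p (eps c))), if_pos hxmem]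
      rw [nsum, nsum]
      have hsub := Finset.sum_sub_distrib (s := Finset.Ioo a b)
        (f := fun c => if c ∈ J ∪ {x} then -(A p (eps c)) else 0)
        (g := fun c => if c ∈ J then -(A p (eps c)) else 0)
      rw [hsub] at key
      linarith [key]

end Stmt4Aux

namespace Stmt4Aux
set_option linter.unusedSectionVars false
variable {P E : Type*} [Fintype P] [PartialOrder E] [LocallyFiniteOrder E]
  {A : P → P → ℤ} {eps : E → P}

open Classical in
lemma sum_A_ite (p : P) (x : E) :
    (∑ s : P, A p s * (if eps x = s then 1 else 0)) = A p (eps x) := by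
  rw [Finset.sum_congr rfl (g := fun s => if eps x = s then A p s else 0)
    (fun s _ => by by_cases h : eps x = s <;> simp [h])]
  simp

open Classical in
lemma key_up (hA : IsGCM A) (hE : IsFullHeap A eps) :
    ∀ (n : ℕ) (J K : Set E), IsProperIdeal eps J → IsProperIdeal eps K → J ⊆ K →
    (K \ J).ncard = n → ∀ (p : P) (a b a' b' : E),
    TopAt eps J p a → BotAt eps J p b → TopAt eps K p a' → BotAt eps K p b' →
    nsum A eps p K a' b' - nsum A eps p J a b = - ∑ s : P, A p s * chiFn eps J K s := by
  intro n
  induction n with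
  | zero =>
    intro J K hJ hK hJK hcard p a b a' b' ha hb ha' hb'
    have hfin : (K \ J).Finite := diff_finite hE hK hJ
    have hempty : K \ J = ∅ := by
      rwa [Set.ncard_eq_zero hfin] at hcard
    have hKJ : J = K := by
      apply Set.Subset.antisymm hJK
      intro x hx
      by_contra hxJ
      rw [Set.eq_empty_iff_forall_notMem] at hempty
      exact hempty x ⟨hx, hxJ⟩
    subst hKJ
    have e1 : a' = a := topAt_unique hE ha' ha
    have e2 : b' = b := botAt_unique hE hb' hb
    have e3 : ∀ s, chiFn eps J J s = 0 := by
      intro s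
      rw [chiFn]
      simp
    rw [e1, e2]
    rw [Finset.sum_congr rfl (fun s _ => by rw [e3 s, mul_zero])]
    simp
  | succ n ih =>
    intro J K hJ hK hJK hcard p a b a' b' ha hb ha' hb'
    have hfin : (K \ J).Finite := diff_finite hE hK hJ
    have hne : (K \ J).Nonempty := by
      rw [Set.nonempty_iff_ne_empty]
      intro h
      rw [h, Set.ncard_empty] at hcard
      omega
    obtain ⟨x, hx, hmin⟩ := Set.Finite.exists_minimalFor id (K \ J) hfin hne
    have hxK : x ∈ K := hx.1
    have hxJ : x ∉ J := hx.2
    have hadd : ∀ y, y < x → y ∈ J := by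
      intro y hy
      by_contra hyJ
      have hyK : y ∈ K := hK.1 hxK hy.le
      have := le_antisymm (hmin ⟨hyK, hyJ⟩ hy.le) hy.le
      exact hy.ne (show y = x by simpa using this.symm)
    have hJ' : IsProperIdeal eps (J ∪ {x}) := by
      refine ⟨(isIdeal_union_iff hJ.1 hxJ).2 hadd, fun r => ⟨?_, ?_⟩⟩
      · obtain ⟨y, hyp, hy⟩ := (hJ.2 r).1
        exact ⟨y, hyp, Or.inl hy⟩
      · obtain ⟨y, hyp, hy⟩ := (hK.2 r).2
        refine ⟨y, hyp, ?_⟩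
        rintro (h | h)
        · exact hy (hJK h)
        · rw [Set.mem_singleton_iff] at h
          exact hy (h ▸ hxK)
    have hsub' : J ∪ {x} ⊆ K := by
      rintro y (h | h)
      · exact hJK h
      · rw [Set.mem_singleton_iff] at h
        exact h ▸ hxK
    have hcard' : (K \ (J ∪ {x})).ncard = n := by
      have he : K \ (J ∪ {x}) = (K \ J) \ {x} := by
        ext y
        simp only [Set.mem_diff, Set.mem_union, Set.mem_singleton_iff]
        tauto
      rw [he, Set.ncard_diff_singleton_of_mem hx, hcard]
      omega
    obtain ⟨a'', ha''⟩ := exists_top hE hJ' p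
    obtain ⟨b'', hb''⟩ := exists_bot hE hJ' p
    have hIH := ih (J ∪ {x}) K hJ' hK hsub' hcard' p a'' b'' a' b' ha'' hb'' ha' hb'
    have hstep := nsum_insert hA hE hJ hxJ hadd p ha hb ha'' hb''
    have hchi : ∀ s, chiFn eps (J ∪ {x}) K s
        = chiFn eps J K s - (if eps x = s then 1 else 0) :=
      chi_insert_left hE hJ hK hxJ hxK
    have hsum : (∑ s : P, A p s * chiFn eps (J ∪ {x}) K s)
        = (∑ s : P, A p s * chiFn eps J K s) - A p (eps x) := by
      rw [Finset.sum_congr rfl (fun s _ => by rw [hchi s, mul_sub])]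
      rw [Finset.sum_sub_distrib, sum_A_ite]
    rw [hsum] at hIH
    linarith [hIH, hstep]

open Classical in
lemma key (hA : IsGCM A) (hE : IsFullHeap A eps) {I J : Set E}
    (hI : IsProperIdeal eps I) (hJ : IsProperIdeal eps J) (p : P) {a b a' b' : E}
    (ha : TopAt eps I p a) (hb : BotAt eps I p b)
    (ha' : TopAt eps J p a') (hb' : BotAt eps J p b') :
    nsum A eps p J a' b' - nsum A eps p I a b = - ∑ s : P, A p s * chiFn eps I J s := by
  have hG : IsProperIdeal eps (I ∩ J) := by
    refine ⟨fun x hx y hyx => ⟨hI.1 hx.1 hyx, hJ.1 hx.2 hyx⟩, fun r => ⟨?_, ?_⟩⟩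
    · obtain ⟨y, hyp, hy⟩ := (hI.2 r).1
      obtain ⟨z, hzp, hz⟩ := (hJ.2 r).1
      rcases comp_fib hE (hyp.trans hzp.symm) with h | h
      · exact ⟨y, hyp, hy, hJ.1 hz h⟩
      · exact ⟨z, hzp, hI.1 hy h, hz⟩
    · obtain ⟨y, hyp, hy⟩ := (hI.2 r).2
      exact ⟨y, hyp, fun h => hy h.1⟩
  obtain ⟨aG, haG⟩ := exists_top hE hG p
  obtain ⟨bG, hbG⟩ := exists_bot hE hG p
  have hfinI : ((I \ (I ∩ J))).Finite := diff_finite hE hI hG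
  have hfinJ : ((J \ (I ∩ J))).Finite := diff_finite hE hJ hG
  have h1 := key_up hA hE (I \ (I ∩ J)).ncard (I ∩ J) I hG hI Set.inter_subset_left rfl
    p aG bG a b haG hbG ha hb
  have h2 := key_up hA hE (J \ (I ∩ J)).ncard (I ∩ J) J hG hJ Set.inter_subset_right rfl
    p aG bG a' b' haG hbG ha' hb'
  have hchi : ∀ s, chiFn eps (I ∩ J) J s - chiFn eps (I ∩ J) I s = chiFn eps I J s := by
    intro s
    rw [chiFn, chiFn, chiFn]
    have e1 : (J \ (I ∩ J)) = J \ I := by ext y; simp only [Set.mem_diff, Set.mem_inter_iff]; tauto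
    have e2 : ((I ∩ J) \ J) = (∅ : Set E) := by
      ext y; simp only [Set.mem_diff, Set.mem_inter_iff, Set.mem_empty_iff_false]; tauto
    have e3 : (I \ (I ∩ J)) = I \ J := by ext y; simp only [Set.mem_diff, Set.mem_inter_iff]; tauto
    have e4 : ((I ∩ J) \ I) = (∅ : Set E) := by
      ext y; simp only [Set.mem_diff, Set.mem_inter_iff, Set.mem_empty_iff_false]; tauto
    rw [e1, e2, e3, e4]
    simp only [Set.empty_inter, Set.ncard_empty]
    push_cast
    ring
  have hsum : (∑ s : P, A p s * chiFn eps (I ∩ J) J s)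
      - (∑ s : P, A p s * chiFn eps (I ∩ J) I s) = ∑ s : P, A p s * chiFn eps I J s := by
    rw [← Finset.sum_sub_distrib]
    apply Finset.sum_congr rfl
    intro s _
    rw [← mul_sub, hchi s]
  linarith [h1, h2, hsum]

end Stmt4Aux

namespace Stmt4Aux
set_option linter.unusedSectionVars false
variable {P E : Type*} [Fintype P] [PartialOrder E] [LocallyFiniteOrder E]
  {A : P → P → ℤ} {eps : E → P}

open Classical in
/-- Master formula: `Sact` acts on χ-coordinates as an affine reflection. -/
lemma master (hA : IsGCM A) (hE : IsFullHeap A eps) {I₀ : Set E}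
    (hI₀ : IsProperIdeal eps I₀) (p : P) :
    ∃ κ : ℤ, ∀ J : Set E, IsProperIdeal eps J → ∀ s : P,
      chiFn eps I₀ (Sact eps p J) s =
        if s = p then chiFn eps I₀ J p - (∑ t : P, A p t * chiFn eps I₀ J t) + κ
        else chiFn eps I₀ J s := by
  obtain ⟨a₀, ha₀⟩ := exists_top hE hI₀ p
  obtain ⟨b₀, hb₀⟩ := exists_bot hE hI₀ p
  refine ⟨nsum A eps p I₀ a₀ b₀ - 1, ?_⟩
  intro J hJ s
  obtain ⟨a, ha⟩ := exists_top hE hJ p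
  obtain ⟨b, hb⟩ := exists_bot hE hJ p
  have hkey := key hA hE hI₀ hJ p ha₀ hb₀ ha hb
  have hn0 := nsum_nonneg hA hE hJ.1 ha hb
  have hn2 := nsum_le_two hA hE hJ.1 ha hb
  have hsum : (∑ t : P, A p t * chiFn eps I₀ J t)
      = nsum A eps p I₀ a₀ b₀ - nsum A eps p J a b := by linarith [hkey]
  interval_cases hn : (nsum A eps p J a b)
  · -- removal
    have hid : IsIdeal (J \ {a}) := by
      refine (isIdeal_diff_iff hJ.1 ha.1).2 ?_
      intro x hx hax
      by_contra hne
      exact (maximal_iff_nsum_zero hA hE hJ.1 ha hb).2 hn x hx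
        (lt_of_le_of_ne hax (Ne.symm hne))
    have hSact := Sact_eq_of_nsum_zero hA hE hJ.1 ha hb hn
    have hprop : IsProperIdeal eps (J \ {a}) := proper_diff_top hE hJ ha hid
    have hrestore : (J \ {a}) ∪ {a} = J := by
      ext y
      simp only [Set.mem_union, Set.mem_diff, Set.mem_singleton_iff]
      constructor
      · rintro (⟨h, _⟩ | h)
        · exact h
        · exact h ▸ ha.1
      · intro h
        by_cases hy : y = a
        · exact Or.inr hy
        · exact Or.inl ⟨h, hy⟩
    have hchi : chiFn eps I₀ J s = chiFn eps I₀ (J \ {a}) s + (if eps a = s then 1 else 0) := by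
      have := chi_insert hE hI₀ hprop (x := a) (by simp) s
      rwa [hrestore] at this
    rw [hSact]
    by_cases hsp : s = p
    · subst hsp
      rw [if_pos rfl, hsum]
      rw [ha.2.1] at hchi
      rw [if_pos rfl] at hchi
      omega
    · rw [if_neg hsp]
      rw [ha.2.1] at hchi
      rw [if_neg (fun h => hsp h.symm)] at hchi
      omega
  · -- nothing happens
    rw [Sact_eq_of_nsum_one hA hE hJ.1 ha hb hn]
    by_cases hsp : s = p
    · subst hsp
      rw [if_pos rfl, hsum]
      ring
    · rw [if_neg hsp]
  · -- addition
    have hSact := Sact_eq_of_nsum_two hA hE hJ.1 ha hb hn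
    have hchi : chiFn eps I₀ (J ∪ {b}) s
        = chiFn eps I₀ J s + (if eps b = s then 1 else 0) :=
      chi_insert hE hI₀ hJ hb.1 s
    rw [hSact]
    by_cases hsp : s = p
    · subst hsp
      rw [if_pos rfl, hsum]
      rw [hb.2.1, if_pos rfl] at hchi
      omega
    · rw [if_neg hsp]
      rw [hb.2.1, if_neg (fun h => hsp h.symm)] at hchi
      omega

end Stmt4Aux

namespace Stmt4Aux
set_option linter.unusedSectionVars false
variable {P E : Type*} [Fintype P] [PartialOrder E] [LocallyFiniteOrder E]
  {A : P → P → ℤ} {eps : E → P}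

lemma chi_self (I : Set E) (s : P) : chiFn eps I I s = 0 := by
  simp [chiFn]

lemma sum_support_two {v : P → ℤ} {p q : P} (hpq : p ≠ q)
    (hoff : ∀ s, s ≠ p → s ≠ q → v s = 0) (p' : P) :
    ∑ t : P, A p' t * v t = A p' p * v p + A p' q * v q := by
  classical
  have hsub : ({p, q} : Finset P) ⊆ Finset.univ := Finset.subset_univ _
  rw [← Finset.sum_subset hsub (fun t _ ht => by
    have h1 : t ≠ p := fun h => ht (by simp [h])
    have h2 : t ≠ q := fun h => ht (by simp [h])
    rw [hoff t h1 h2, mul_zero])]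
  rw [Finset.sum_pair hpq]

open Classical in
/-- One step of the word dynamics on the two relevant coordinates. -/
lemma step_master (hA : IsGCM A) {I₀ : Set E} {p q : P} (hpq : p ≠ q) {κp : ℤ}
    (hκ : ∀ J : Set E, IsProperIdeal eps J → ∀ s : P,
      chiFn eps I₀ (Sact eps p J) s =
        if s = p then chiFn eps I₀ J p - (∑ t : P, A p t * chiFn eps I₀ J t) + κp
        else chiFn eps I₀ J s)
    {J : Set E} (hJ : IsProperIdeal eps J)
    (hoff : ∀ s, s ≠ p → s ≠ q → chiFn eps I₀ J s = 0) :
    (chiFn eps I₀ (Sact eps p J) p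
        = - chiFn eps I₀ J p - A p q * chiFn eps I₀ J q + κp)
    ∧ (chiFn eps I₀ (Sact eps p J) q = chiFn eps I₀ J q)
    ∧ (∀ s, s ≠ p → s ≠ q → chiFn eps I₀ (Sact eps p J) s = 0) := by
  have hsum := sum_support_two (A := A) hpq hoff p
  refine ⟨?_, ?_, ?_⟩
  · rw [hκ J hJ p, if_pos rfl, hsum, hA.1 p]
    ring
  · rw [hκ J hJ q, if_neg (Ne.symm hpq)]
  · intro s h1 h2
    rw [hκ J hJ s, if_neg h1]
    exact hoff s h1 h2

lemma Sact_invol (hA : IsGCM A) (hE : IsFullHeap A eps) {I : Set E}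
    (hI : IsProperIdeal eps I) (p : P) : Sact eps p (Sact eps p I) = I := by
  classical
  obtain ⟨κ, hκ⟩ := master hA hE hI p
  have hP1 : IsProperIdeal eps (Sact eps p I) := proper_Sact hA hE hI p
  have hP2 : IsProperIdeal eps (Sact eps p (Sact eps p I)) := proper_Sact hA hE hP1 p
  apply chi_inj hE hP2 hI
  intro s
  -- χ(Sact² I, I) = 0 iff χ(I, Sact² I) = 0 : show the latter after symmetry
  have hsymm : ∀ (F G : Set E) (r : P), chiFn eps F G r = - chiFn eps G F r := by
    intro F G r
    rw [chiFn, chiFn]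
    ring
  rw [hsymm]
  have h0 : ∀ t, chiFn eps I I t = 0 := chi_self I
  have h1 : ∀ t, chiFn eps I (Sact eps p I) t = if t = p then κ else 0 := by
    intro t
    rw [hκ I hI t]
    by_cases htp : t = p
    · subst htp
      rw [if_pos rfl, if_pos rfl, h0]
      rw [Finset.sum_congr rfl (fun u _ => by rw [h0 u, mul_zero])]
      simp
    · rw [if_neg htp, if_neg htp, h0]
  have hsum1 : (∑ t : P, A p t * chiFn eps I (Sact eps p I) t) = 2 * κ := by
    rw [Finset.sum_congr rfl (fun u _ => by rw [h1 u])]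
    rw [Finset.sum_congr rfl (g := fun u => if u = p then A p u * κ else 0)
      (fun u _ => by by_cases h : u = p <;> simp [h])]
    rw [Finset.sum_ite_eq' Finset.univ p (fun u => A p u * κ)]
    rw [if_pos (Finset.mem_univ p), hA.1 p]
  have h2 := hκ (Sact eps p I) hP1 s
  by_cases hsp : s = p
  · subst hsp
    rw [if_pos rfl, hsum1, h1] at h2
    rw [if_pos rfl] at h2
    rw [h2]
    ring
  · rw [if_neg hsp, h1, if_neg hsp] at h2
    rw [h2]
    ring

end Stmt4Aux

namespace Stmt4Aux
set_option linter.unusedSectionVars false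
variable {P E : Type*} [Fintype P] [PartialOrder E] [LocallyFiniteOrder E]
  {A : P → P → ℤ} {eps : E → P}

open Classical in
lemma braid_word2 (hA : IsGCM A) (hE : IsFullHeap A eps) {I : Set E}
    (hI : IsProperIdeal eps I) {p q : P} (hpq : p ≠ q) (hapq : A p q = 0) (haqp : A q p = 0) :
    Sact eps p (Sact eps q (Sact eps p (Sact eps q (I)))) = I := by
  obtain ⟨κp, hκp⟩ := master hA hE hI p
  obtain ⟨κq, hκq⟩ := master hA hE hI q
  have hP0 : IsProperIdeal eps I := hI
  have hP1 : IsProperIdeal eps (Sact eps q (I)) := proper_Sact hA hE hP0 q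
  have hP2 : IsProperIdeal eps (Sact eps p (Sact eps q (I))) := proper_Sact hA hE hP1 p
  have hP3 : IsProperIdeal eps (Sact eps q (Sact eps p (Sact eps q (I)))) := proper_Sact hA hE hP2 q
  have hP4 : IsProperIdeal eps (Sact eps p (Sact eps q (Sact eps p (Sact eps q (I))))) := proper_Sact hA hE hP3 p
  have hx0 : chiFn eps I I p = 0 := chi_self I p
  have hy0 : chiFn eps I I q = 0 := chi_self I q
  have hoff0 : ∀ s, s ≠ p → s ≠ q → chiFn eps I I s = 0 := fun s _ _ => chi_self I s
  have st1 := step_master hA hpq.symm hκq hP0 (fun s h1 h2 => hoff0 s h2 h1)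
  have hy1 := st1.1
  have hx1 := st1.2.1
  have hoff1 := (fun s h1 h2 => st1.2.2 s h2 h1)
  have st2 := step_master hA hpq hκp hP1 hoff1
  have hx2 := st2.1
  have hy2 := st2.2.1
  have hoff2 := st2.2.2
  have st3 := step_master hA hpq.symm hκq hP2 (fun s h1 h2 => hoff2 s h2 h1)
  have hy3 := st3.1
  have hx3 := st3.2.1
  have hoff3 := (fun s h1 h2 => st3.2.2 s h2 h1)
  have st4 := step_master hA hpq hκp hP3 hoff3
  have hx4 := st4.1
  have hy4 := st4.2.1
  have hoff4 := st4.2.2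
  rw [hapq] at *
  rw [haqp] at *
  apply (chi_inj hE hI hP4 ?_).symm
  intro r
  by_cases hrp : r = p
  · subst hrp
    linarith [hx0, hx1, hx2, hx3, hx4, hy0, hy1, hy2, hy3, hy4]
  · by_cases hrq : r = q
    · subst hrq
      linarith [hx0, hx1, hx2, hx3, hx4, hy0, hy1, hy2, hy3, hy4]
    · exact hoff4 r hrp hrq

open Classical in
lemma braid_word3 (hA : IsGCM A) (hE : IsFullHeap A eps) {I : Set E}
    (hI : IsProperIdeal eps I) {p q : P} (hpq : p ≠ q) (hapq : A p q = -1) (haqp : A q p = -1) :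
    Sact eps p (Sact eps q (Sact eps p (Sact eps q (Sact eps p (Sact eps q (I)))))) = I := by
  obtain ⟨κp, hκp⟩ := master hA hE hI p
  obtain ⟨κq, hκq⟩ := master hA hE hI q
  have hP0 : IsProperIdeal eps I := hI
  have hP1 : IsProperIdeal eps (Sact eps q (I)) := proper_Sact hA hE hP0 q
  have hP2 : IsProperIdeal eps (Sact eps p (Sact eps q (I))) := proper_Sact hA hE hP1 p
  have hP3 : IsProperIdeal eps (Sact eps q (Sact eps p (Sact eps q (I)))) := proper_Sact hA hE hP2 q
  have hP4 : IsProperIdeal eps (Sact eps p (Sact eps q (Sact eps p (Sact eps q (I))))) := proper_Sact hA hE hP3 p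
  have hP5 : IsProperIdeal eps (Sact eps q (Sact eps p (Sact eps q (Sact eps p (Sact eps q (I)))))) := proper_Sact hA hE hP4 q
  have hP6 : IsProperIdeal eps (Sact eps p (Sact eps q (Sact eps p (Sact eps q (Sact eps p (Sact eps q (I))))))) := proper_Sact hA hE hP5 p
  have hx0 : chiFn eps I I p = 0 := chi_self I p
  have hy0 : chiFn eps I I q = 0 := chi_self I q
  have hoff0 : ∀ s, s ≠ p → s ≠ q → chiFn eps I I s = 0 := fun s _ _ => chi_self I s
  have st1 := step_master hA hpq.symm hκq hP0 (fun s h1 h2 => hoff0 s h2 h1)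
  have hy1 := st1.1
  have hx1 := st1.2.1
  have hoff1 := (fun s h1 h2 => st1.2.2 s h2 h1)
  have st2 := step_master hA hpq hκp hP1 hoff1
  have hx2 := st2.1
  have hy2 := st2.2.1
  have hoff2 := st2.2.2
  have st3 := step_master hA hpq.symm hκq hP2 (fun s h1 h2 => hoff2 s h2 h1)
  have hy3 := st3.1
  have hx3 := st3.2.1
  have hoff3 := (fun s h1 h2 => st3.2.2 s h2 h1)
  have st4 := step_master hA hpq hκp hP3 hoff3
  have hx4 := st4.1
  have hy4 := st4.2.1
  have hoff4 := st4.2.2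
  have st5 := step_master hA hpq.symm hκq hP4 (fun s h1 h2 => hoff4 s h2 h1)
  have hy5 := st5.1
  have hx5 := st5.2.1
  have hoff5 := (fun s h1 h2 => st5.2.2 s h2 h1)
  have st6 := step_master hA hpq hκp hP5 hoff5
  have hx6 := st6.1
  have hy6 := st6.2.1
  have hoff6 := st6.2.2
  rw [hapq] at *
  rw [haqp] at *
  apply (chi_inj hE hI hP6 ?_).symm
  intro r
  by_cases hrp : r = p
  · subst hrp
    linarith [hx0, hx1, hx2, hx3, hx4, hx5, hx6, hy0, hy1, hy2, hy3, hy4, hy5, hy6]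
  · by_cases hrq : r = q
    · subst hrq
      linarith [hx0, hx1, hx2, hx3, hx4, hx5, hx6, hy0, hy1, hy2, hy3, hy4, hy5, hy6]
    · exact hoff6 r hrp hrq

open Classical in
lemma braid_word4 (hA : IsGCM A) (hE : IsFullHeap A eps) {I : Set E}
    (hI : IsProperIdeal eps I) {p q : P} (hpq : p ≠ q) (hapq : A p q = -1) (haqp : A q p = -2) :
    Sact eps p (Sact eps q (Sact eps p (Sact eps q (Sact eps p (Sact eps q (Sact eps p (Sact eps q (I)))))))) = I := by
  obtain ⟨κp, hκp⟩ := master hA hE hI p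
  obtain ⟨κq, hκq⟩ := master hA hE hI q
  have hP0 : IsProperIdeal eps I := hI
  have hP1 : IsProperIdeal eps (Sact eps q (I)) := proper_Sact hA hE hP0 q
  have hP2 : IsProperIdeal eps (Sact eps p (Sact eps q (I))) := proper_Sact hA hE hP1 p
  have hP3 : IsProperIdeal eps (Sact eps q (Sact eps p (Sact eps q (I)))) := proper_Sact hA hE hP2 q
  have hP4 : IsProperIdeal eps (Sact eps p (Sact eps q (Sact eps p (Sact eps q (I))))) := proper_Sact hA hE hP3 p
  have hP5 : IsProperIdeal eps (Sact eps q (Sact eps p (Sact eps q (Sact eps p (Sact eps q (I)))))) := proper_Sact hA hE hP4 q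
  have hP6 : IsProperIdeal eps (Sact eps p (Sact eps q (Sact eps p (Sact eps q (Sact eps p (Sact eps q (I))))))) := proper_Sact hA hE hP5 p
  have hP7 : IsProperIdeal eps (Sact eps q (Sact eps p (Sact eps q (Sact eps p (Sact eps q (Sact eps p (Sact eps q (I)))))))) := proper_Sact hA hE hP6 q
  have hP8 : IsProperIdeal eps (Sact eps p (Sact eps q (Sact eps p (Sact eps q (Sact eps p (Sact eps q (Sact eps p (Sact eps q (I))))))))) := proper_Sact hA hE hP7 p
  have hx0 : chiFn eps I I p = 0 := chi_self I p
  have hy0 : chiFn eps I I q = 0 := chi_self I q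
  have hoff0 : ∀ s, s ≠ p → s ≠ q → chiFn eps I I s = 0 := fun s _ _ => chi_self I s
  have st1 := step_master hA hpq.symm hκq hP0 (fun s h1 h2 => hoff0 s h2 h1)
  have hy1 := st1.1
  have hx1 := st1.2.1
  have hoff1 := (fun s h1 h2 => st1.2.2 s h2 h1)
  have st2 := step_master hA hpq hκp hP1 hoff1
  have hx2 := st2.1
  have hy2 := st2.2.1
  have hoff2 := st2.2.2
  have st3 := step_master hA hpq.symm hκq hP2 (fun s h1 h2 => hoff2 s h2 h1)
  have hy3 := st3.1
  have hx3 := st3.2.1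
  have hoff3 := (fun s h1 h2 => st3.2.2 s h2 h1)
  have st4 := step_master hA hpq hκp hP3 hoff3
  have hx4 := st4.1
  have hy4 := st4.2.1
  have hoff4 := st4.2.2
  have st5 := step_master hA hpq.symm hκq hP4 (fun s h1 h2 => hoff4 s h2 h1)
  have hy5 := st5.1
  have hx5 := st5.2.1
  have hoff5 := (fun s h1 h2 => st5.2.2 s h2 h1)
  have st6 := step_master hA hpq hκp hP5 hoff5
  have hx6 := st6.1
  have hy6 := st6.2.1
  have hoff6 := st6.2.2
  have st7 := step_master hA hpq.symm hκq hP6 (fun s h1 h2 => hoff6 s h2 h1)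
  have hy7 := st7.1
  have hx7 := st7.2.1
  have hoff7 := (fun s h1 h2 => st7.2.2 s h2 h1)
  have st8 := step_master hA hpq hκp hP7 hoff7
  have hx8 := st8.1
  have hy8 := st8.2.1
  have hoff8 := st8.2.2
  rw [hapq] at *
  rw [haqp] at *
  apply (chi_inj hE hI hP8 ?_).symm
  intro r
  by_cases hrp : r = p
  · subst hrp
    linarith [hx0, hx1, hx2, hx3, hx4, hx5, hx6, hx7, hx8, hy0, hy1, hy2, hy3, hy4, hy5, hy6, hy7, hy8]
  · by_cases hrq : r = q
    · subst hrq
      linarith [hx0, hx1, hx2, hx3, hx4, hx5, hx6, hx7, hx8, hy0, hy1, hy2, hy3, hy4, hy5, hy6, hy7, hy8]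
    · exact hoff8 r hrp hrq

open Classical in
lemma braid_word4' (hA : IsGCM A) (hE : IsFullHeap A eps) {I : Set E}
    (hI : IsProperIdeal eps I) {p q : P} (hpq : p ≠ q) (hapq : A p q = -2) (haqp : A q p = -1) :
    Sact eps p (Sact eps q (Sact eps p (Sact eps q (Sact eps p (Sact eps q (Sact eps p (Sact eps q (I)))))))) = I := by
  obtain ⟨κp, hκp⟩ := master hA hE hI p
  obtain ⟨κq, hκq⟩ := master hA hE hI q
  have hP0 : IsProperIdeal eps I := hI
  have hP1 : IsProperIdeal eps (Sact eps q (I)) := proper_Sact hA hE hP0 q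
  have hP2 : IsProperIdeal eps (Sact eps p (Sact eps q (I))) := proper_Sact hA hE hP1 p
  have hP3 : IsProperIdeal eps (Sact eps q (Sact eps p (Sact eps q (I)))) := proper_Sact hA hE hP2 q
  have hP4 : IsProperIdeal eps (Sact eps p (Sact eps q (Sact eps p (Sact eps q (I))))) := proper_Sact hA hE hP3 p
  have hP5 : IsProperIdeal eps (Sact eps q (Sact eps p (Sact eps q (Sact eps p (Sact eps q (I)))))) := proper_Sact hA hE hP4 q
  have hP6 : IsProperIdeal eps (Sact eps p (Sact eps q (Sact eps p (Sact eps q (Sact eps p (Sact eps q (I))))))) := proper_Sact hA hE hP5 p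
  have hP7 : IsProperIdeal eps (Sact eps q (Sact eps p (Sact eps q (Sact eps p (Sact eps q (Sact eps p (Sact eps q (I)))))))) := proper_Sact hA hE hP6 q
  have hP8 : IsProperIdeal eps (Sact eps p (Sact eps q (Sact eps p (Sact eps q (Sact eps p (Sact eps q (Sact eps p (Sact eps q (I))))))))) := proper_Sact hA hE hP7 p
  have hx0 : chiFn eps I I p = 0 := chi_self I p
  have hy0 : chiFn eps I I q = 0 := chi_self I q
  have hoff0 : ∀ s, s ≠ p → s ≠ q → chiFn eps I I s = 0 := fun s _ _ => chi_self I s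
  have st1 := step_master hA hpq.symm hκq hP0 (fun s h1 h2 => hoff0 s h2 h1)
  have hy1 := st1.1
  have hx1 := st1.2.1
  have hoff1 := (fun s h1 h2 => st1.2.2 s h2 h1)
  have st2 := step_master hA hpq hκp hP1 hoff1
  have hx2 := st2.1
  have hy2 := st2.2.1
  have hoff2 := st2.2.2
  have st3 := step_master hA hpq.symm hκq hP2 (fun s h1 h2 => hoff2 s h2 h1)
  have hy3 := st3.1
  have hx3 := st3.2.1
  have hoff3 := (fun s h1 h2 => st3.2.2 s h2 h1)
  have st4 := step_master hA hpq hκp hP3 hoff3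
  have hx4 := st4.1
  have hy4 := st4.2.1
  have hoff4 := st4.2.2
  have st5 := step_master hA hpq.symm hκq hP4 (fun s h1 h2 => hoff4 s h2 h1)
  have hy5 := st5.1
  have hx5 := st5.2.1
  have hoff5 := (fun s h1 h2 => st5.2.2 s h2 h1)
  have st6 := step_master hA hpq hκp hP5 hoff5
  have hx6 := st6.1
  have hy6 := st6.2.1
  have hoff6 := st6.2.2
  have st7 := step_master hA hpq.symm hκq hP6 (fun s h1 h2 => hoff6 s h2 h1)
  have hy7 := st7.1
  have hx7 := st7.2.1
  have hoff7 := (fun s h1 h2 => st7.2.2 s h2 h1)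
  have st8 := step_master hA hpq hκp hP7 hoff7
  have hx8 := st8.1
  have hy8 := st8.2.1
  have hoff8 := st8.2.2
  rw [hapq] at *
  rw [haqp] at *
  apply (chi_inj hE hI hP8 ?_).symm
  intro r
  by_cases hrp : r = p
  · subst hrp
    linarith [hx0, hx1, hx2, hx3, hx4, hx5, hx6, hx7, hx8, hy0, hy1, hy2, hy3, hy4, hy5, hy6, hy7, hy8]
  · by_cases hrq : r = q
    · subst hrq
      linarith [hx0, hx1, hx2, hx3, hx4, hx5, hx6, hx7, hx8, hy0, hy1, hy2, hy3, hy4, hy5, hy6, hy7, hy8]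
    · exact hoff8 r hrp hrq

end Stmt4Aux

namespace Stmt4Aux
set_option linter.unusedSectionVars false
variable {P E : Type*} [Fintype P] [PartialOrder E] [LocallyFiniteOrder E]
  {A : P → P → ℤ} {eps : E → P}

noncomputable def SPerm (hA : IsGCM A) (hE : IsFullHeap A eps) (p : P) :
    Equiv.Perm {I : Set E // IsProperIdeal eps I} :=
  Function.Involutive.toPerm (fun x => ⟨Sact eps p x.1, proper_Sact hA hE x.2 p⟩)
    (fun x => Subtype.ext (Sact_invol hA hE x.2 p))

lemma SPerm_apply (hA : IsGCM A) (hE : IsFullHeap A eps) (p : P)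
    (x : {I : Set E // IsProperIdeal eps I}) :
    (SPerm hA hE p x).val = Sact eps p x.val := rfl

lemma lift_relations (hA : IsGCM A) (hE : IsFullHeap A eps) :
    ∀ r ∈ weylRels A, FreeGroup.lift (SPerm hA hE) r = 1 := by
  rintro r (⟨p, rfl⟩ | ⟨p, q, hpq0, rfl⟩ | ⟨p, q, hprod, rfl⟩ | ⟨p, q, hprod, rfl⟩)
  · rw [map_pow, FreeGroup.lift_apply_of]
    rw [pow_two]
    refine Equiv.ext fun x => Subtype.ext ?_
    show Sact eps p (Sact eps p x.val) = x.val
    exact Sact_invol hA hE x.2 p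
  · -- commuting case
    have hpq : p ≠ q := by
      intro h
      subst h
      rw [hA.1 p] at hpq0
      omega
    have hqp0 : A q p = 0 := (hA.2.2.1 p q).1 hpq0
    rw [map_pow, map_mul, FreeGroup.lift_apply_of, FreeGroup.lift_apply_of]
    rw [pow_two]
    refine Equiv.ext fun x => Subtype.ext ?_
    show Sact eps p (Sact eps q (Sact eps p (Sact eps q x.val))) = x.val
    exact braid_word2 hA hE x.2 hpq hpq0 hqp0
  · -- order 3
    have hpq : p ≠ q := by
      intro h
      subst h
      rw [hA.1 p] at hprod
      omega
    have h1 : A p q = -1 := by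
      rcases hA.2.2.2 p q with h | h | h | h <;> rw [h] at hprod <;> omega
    have h2 : A q p = -1 := by rw [h1] at hprod; omega
    rw [map_pow, map_mul, FreeGroup.lift_apply_of, FreeGroup.lift_apply_of]
    rw [pow_succ, pow_two]
    refine Equiv.ext fun x => Subtype.ext ?_
    show Sact eps p (Sact eps q (Sact eps p (Sact eps q (Sact eps p (Sact eps q x.val)))))
      = x.val
    exact braid_word3 hA hE x.2 hpq h1 h2
  · -- order 4
    have hpq : p ≠ q := by
      intro h
      subst h
      rw [hA.1 p] at hprod
      omega
    rw [map_pow, map_mul, FreeGroup.lift_apply_of, FreeGroup.lift_apply_of]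
    rw [show (4 : ℕ) = 2 + 2 by rfl, pow_add, pow_two]
    refine Equiv.ext fun x => Subtype.ext ?_
    show Sact eps p (Sact eps q (Sact eps p (Sact eps q (Sact eps p (Sact eps q
      (Sact eps p (Sact eps q x.val))))))) = x.val
    have hcase : (A p q = -1 ∧ A q p = -2) ∨ (A p q = -2 ∧ A q p = -1) := by
      have hn1 : A p q ≤ 0 := hA.2.1 p q hpq
      have hn2 : A q p ≤ 0 := hA.2.1 q p hpq.symm
      rcases hA.2.2.2 p q with h | h | h | h <;> rw [h] at hprod ⊢ <;> omega
    rcases hcase with ⟨h1, h2⟩ | ⟨h1, h2⟩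
    · exact braid_word4 hA hE x.2 hpq h1 h2
    · exact braid_word4' hA hE x.2 hpq h1 h2

lemma Sact_remove_of_maximal (hA : IsGCM A) (hE : IsFullHeap A eps) {I : Set E}
    (hI : IsProperIdeal eps I) {x : E} (hx : x ∈ I) (hmax : ∀ z ∈ I, ¬ x < z) :
    Sact eps (eps x) I = I \ {x} := by
  obtain ⟨a, ha⟩ := exists_top hE hI (eps x)
  obtain ⟨b, hb⟩ := exists_bot hE hI (eps x)
  have hxa : x = a := by
    have h1 : x ≤ a := ha.2.2 x hx rfl
    rcases eq_or_lt_of_le h1 with heq | hlt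
    · exact heq
    · exact absurd hlt (hmax a ha.1)
  have h0 : nsum A eps (eps x) I a b = 0 :=
    (maximal_iff_nsum_zero hA hE hI.1 ha hb).1 (hxa ▸ hmax)
  rw [Sact_eq_of_nsum_zero hA hE hI.1 ha hb h0, hxa]

lemma Sact_add_of_addable (hA : IsGCM A) (hE : IsFullHeap A eps) {I : Set E}
    (hI : IsProperIdeal eps I) {x : E} (hx : x ∉ I) (hadd : ∀ y, y < x → y ∈ I) :
    Sact eps (eps x) I = I ∪ {x} := by
  obtain ⟨a, ha⟩ := exists_top hE hI (eps x)
  obtain ⟨b, hb⟩ := exists_bot hE hI (eps x)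
  have hxb : x = b := by
    have h1 : b ≤ x := hb.2.2 x rfl hx
    rcases eq_or_lt_of_le h1 with heq | hlt
    · exact heq.symm
    · exact absurd (hadd b hlt) hb.1
  have h2 : nsum A eps (eps x) I a b = 2 := by
    rw [← full_iff_nsum_two hA hE hI.1 ha hb]
    intro z hz
    exact hadd z (hxb ▸ hz)
  rw [Sact_eq_of_nsum_two hA hE hI.1 ha hb h2, hxb]

lemma reach (hA : IsGCM A) (hE : IsFullHeap A eps)
    (act : WeylGroup A →* Equiv.Perm {I : Set E // IsProperIdeal eps I})
    (hact : ∀ (p : P) (x : {I : Set E // IsProperIdeal eps I}),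
      (act (PresentedGroup.of p) x).val = Sact eps p x.val) :
    ∀ (n : ℕ) (I J : Set E) (hI : IsProperIdeal eps I) (hJ : IsProperIdeal eps J),
      (I \ J).ncard + (J \ I).ncard = n →
      ∃ w : WeylGroup A, act w ⟨I, hI⟩ = ⟨J, hJ⟩ := by
  intro n
  induction n using Nat.strong_induction_on with
  | _ n ih =>
    intro I J hI hJ hcard
    by_cases hIJ : I = J
    · subst hIJ
      exact ⟨1, by rw [map_one]; exact Subtype.ext rfl⟩
    · have hfinIJ : (I \ J).Finite := diff_finite hE hI hJ
      have hfinJI : (J \ I).Finite := diff_finite hE hJ hI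
      by_cases hne : (I \ J).Nonempty
      · -- remove a maximal element of I \ J
        obtain ⟨x, hx, hmax'⟩ := Set.Finite.exists_maximalFor id (I \ J) hfinIJ hne
        have hmax : ∀ z ∈ I, ¬ x < z := by
          intro z hz hlt
          have hzJ : z ∉ J := fun h => hx.2 (hJ.1 h hlt.le)
          exact hlt.ne (le_antisymm hlt.le (hmax' ⟨hz, hzJ⟩ hlt.le))
        have hS : Sact eps (eps x) I = I \ {x} :=
          Sact_remove_of_maximal hA hE hI hx.1 hmax
        have hprop : IsProperIdeal eps (I \ {x}) := by
          rw [← hS]; exact proper_Sact hA hE hI (eps x)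
        have hc1 : ((I \ {x}) \ J) = (I \ J) \ {x} := by
          ext y; simp only [Set.mem_diff, Set.mem_singleton_iff]; tauto
        have hc2 : (J \ (I \ {x})) = J \ I := by
          ext y
          simp only [Set.mem_diff, Set.mem_singleton_iff]
          constructor
          · rintro ⟨hyJ, hy⟩
            refine ⟨hyJ, fun hyI => hy ⟨hyI, fun hxy => hx.2 (hxy ▸ hyJ)⟩⟩
          · rintro ⟨hyJ, hyI⟩
            exact ⟨hyJ, fun h => hyI h.1⟩
        have hcard' : ((I \ {x}) \ J).ncard + (J \ (I \ {x})).ncard = n - 1 := by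
          rw [hc1, hc2, Set.ncard_diff_singleton_of_mem hx]
          have hpos : 0 < (I \ J).ncard := (Set.ncard_pos hfinIJ).2 hne
          omega
        have hlt : n - 1 < n := by
          have hpos : 0 < (I \ J).ncard := (Set.ncard_pos hfinIJ).2 hne
          omega
        obtain ⟨w', hw'⟩ := ih (n - 1) hlt (I \ {x}) J hprop hJ hcard'
        refine ⟨w' * PresentedGroup.of (eps x), ?_⟩
        rw [map_mul]
        have hstep : act (PresentedGroup.of (eps x)) ⟨I, hI⟩ = ⟨I \ {x}, hprop⟩ :=
          Subtype.ext (by rw [hact]; exact hS)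
        rw [Equiv.Perm.mul_apply, hstep, hw']
      · -- add a minimal element of J \ I
        have hsub : I ⊆ J := by
          intro y hy
          by_contra hyJ
          exact hne ⟨y, hy, hyJ⟩
        have hJIne : (J \ I).Nonempty := by
          rw [Set.nonempty_iff_ne_empty]
          intro h
          apply hIJ
          apply Set.Subset.antisymm hsub
          intro y hy
          by_contra hyI
          rw [Set.eq_empty_iff_forall_notMem] at h
          exact h y ⟨hy, hyI⟩
        obtain ⟨x, hx, hmin'⟩ := Set.Finite.exists_minimalFor id (J \ I) hfinJI hJIne
        have hadd : ∀ y, y < x → y ∈ I := by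
          intro y hy
          by_contra hyI
          have hyJ : y ∈ J := hJ.1 hx.1 hy.le
          exact hy.ne (show y = x by simpa using (le_antisymm hy.le (hmin' ⟨hyJ, hyI⟩ hy.le)))
        have hS : Sact eps (eps x) I = I ∪ {x} :=
          Sact_add_of_addable hA hE hI hx.2 hadd
        have hprop : IsProperIdeal eps (I ∪ {x}) := by
          rw [← hS]; exact proper_Sact hA hE hI (eps x)
        have hc1 : ((I ∪ {x}) \ J) = I \ J := by
          ext y
          simp only [Set.mem_diff, Set.mem_union, Set.mem_singleton_iff]
          constructor
          · rintro ⟨hy | hy, hyJ⟩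
            · exact ⟨hy, hyJ⟩
            · exact absurd (hy ▸ hx.1) hyJ
          · rintro ⟨hy, hyJ⟩
            exact ⟨Or.inl hy, hyJ⟩
        have hc2 : (J \ (I ∪ {x})) = (J \ I) \ {x} := by
          ext y
          simp only [Set.mem_diff, Set.mem_union, Set.mem_singleton_iff]
          tauto
        have hcard' : ((I ∪ {x}) \ J).ncard + (J \ (I ∪ {x})).ncard = n - 1 := by
          rw [hc1, hc2, Set.ncard_diff_singleton_of_mem hx]
          have hpos : 0 < (J \ I).ncard := (Set.ncard_pos hfinJI).2 hJIne
          omega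
        have hlt : n - 1 < n := by
          have hpos : 0 < (J \ I).ncard := (Set.ncard_pos hfinJI).2 hJIne
          omega
        obtain ⟨w', hw'⟩ := ih (n - 1) hlt (I ∪ {x}) J hprop hJ hcard'
        refine ⟨w' * PresentedGroup.of (eps x), ?_⟩
        rw [map_mul]
        have hstep : act (PresentedGroup.of (eps x)) ⟨I, hI⟩ = ⟨I ∪ {x}, hprop⟩ :=
          Subtype.ext (by rw [hact]; exact hS)
        rw [Equiv.Perm.mul_apply, hstep, hw']

end Stmt4Aux


/-- Each `S_p` is a permutation of the set `B` of proper
ideals; these permutations satisfy the defining relations of the Weyl group,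
so there is a unique action of `W` on `B` with `s_p · I = S_p(I)`; moreover
this action is transitive. -/
theorem stmt4 {P E : Type*} [Fintype P] [PartialOrder E] [LocallyFiniteOrder E]
    {A : P → P → ℤ} {eps : E → P}
    (hA : IsGCM A) (hE : IsFullHeap A eps) :
    (∀ p : P, Set.BijOn (Sact eps p) {I : Set E | IsProperIdeal eps I}
      {I : Set E | IsProperIdeal eps I}) ∧
    (∃! act : WeylGroup A →* Equiv.Perm {I : Set E // IsProperIdeal eps I},
      ∀ (p : P) (I : {I : Set E // IsProperIdeal eps I}),
        (act (PresentedGroup.of p) I).val = Sact eps p I.val) ∧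
    (∀ act : WeylGroup A →* Equiv.Perm {I : Set E // IsProperIdeal eps I},
      (∀ (p : P) (I : {I : Set E // IsProperIdeal eps I}),
        (act (PresentedGroup.of p) I).val = Sact eps p I.val) →
      ∀ I J : {I : Set E // IsProperIdeal eps I}, ∃ w : WeylGroup A, act w I = J) := by
  refine ⟨?_, ⟨PresentedGroup.toGroup (Stmt4Aux.lift_relations hA hE), ?_, ?_⟩, ?_⟩
  · intro p
    refine ⟨?_, ?_, ?_⟩
    · intro I hI
      exact Stmt4Aux.proper_Sact hA hE hI p
    · intro I hI J hJ hIJ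
      have h := congrArg (Sact eps p) hIJ
      rwa [Stmt4Aux.Sact_invol hA hE hI p, Stmt4Aux.Sact_invol hA hE hJ p] at h
    · intro J hJ
      exact ⟨Sact eps p J, Stmt4Aux.proper_Sact hA hE hJ p, Stmt4Aux.Sact_invol hA hE hJ p⟩
  · intro p I
    rw [PresentedGroup.toGroup.of]
    rfl
  · intro act hact
    apply PresentedGroup.ext
    intro x
    refine Equiv.ext fun I => Subtype.ext ?_
    rw [hact, PresentedGroup.toGroup.of]
    rfl
  · intro act hact I J
    exact Stmt4Aux.reach hA hE act hact _ I.1 J.1 I.2 J.2 rfl
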